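/- Let ‖x‖, ‖y‖, ‖z‖, A, B, C be nonnegative reals satisfying: ‖z‖² = ‖x‖² + ‖y‖², ‖x‖ ≤ ‖z‖, ‖y‖ ≤ ‖z‖, ‖y‖² ≥ ‖x‖² − 2‖x‖A, and ‖x‖² ≥ 2‖y‖² − 2‖y‖(B + C). Then ‖z‖² ≤ 14·‖z‖·max{A, B, C}, i.e., ‖z‖ ≤ 14·max{A, B, C}. -/

import Mathlib

/-- The arithmetic core of the '14 − ε' argument: if nonnegative reals satisfy
`z² = x² + y²`, `x ≤ z`, `y ≤ z`, `y² ≥ x² − 2xA`, and `x² ≥ 2y² − 2y(B + C)`,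
then `z² ≤ 14·z·max{A, B, C}`, i.e. `z ≤ 14·max{A, B, C}`. -/
theorem fourteen_epsilon_arithmetic (x y z A B C : ℝ)
    (hx : 0 ≤ x) (hy : 0 ≤ y) (hz : 0 ≤ z) (hA : 0 ≤ A) (hB : 0 ≤ B) (hC : 0 ≤ C)
    (hsum : z ^ 2 = x ^ 2 + y ^ 2) (hxz : x ≤ z) (hyz : y ≤ z)
    (h1 : y ^ 2 ≥ x ^ 2 - 2 * x * A)
    (h2 : x ^ 2 ≥ 2 * y ^ 2 - 2 * y * (B + C)) :
    z ^ 2 ≤ 14 * z * max A (max B C) ∧ z ≤ 14 * max A (max B C) := by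
  set M := max A (max B C) with hM
  have hAM : A ≤ M := le_max_left _ _
  have hBM : B ≤ M := le_trans (le_max_left _ _) (le_max_right _ _)
  have hCM : C ≤ M := le_trans (le_max_right _ _) (le_max_right _ _)
  have hMnn : 0 ≤ M := le_trans hA hAM
  have key : z ^ 2 ≤ 14 * z * M := by
    nlinarith [mul_nonneg hz (sub_nonneg.2 hAM), mul_nonneg hz (sub_nonneg.2 hBM),
      mul_nonneg hz (sub_nonneg.2 hCM), mul_nonneg hx (sub_nonneg.2 hAM),
      mul_nonneg hy (sub_nonneg.2 hBM), mul_nonneg hy (sub_nonneg.2 hCM),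
      mul_nonneg (sub_nonneg.2 hxz) hA, mul_nonneg (sub_nonneg.2 hyz) hB,
      mul_nonneg (sub_nonneg.2 hyz) hC]
  refine ⟨key, ?_⟩
  rcases eq_or_lt_of_le hz with h0 | h0
  · simpa [← h0] using mul_nonneg (by norm_num : (0:ℝ) ≤ 14) hMnn
  · have := (mul_le_mul_iff_of_pos_right h0).mp (by nlinarith : z * z ≤ (14 * M) * z)
    linarith
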